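/- Let q = 2^m for a positive integer m. Then the polynomial f(x) = x + x^{4q^2+1} + x^{q+4} + x^{q^2+4} + x^{4q+1} is a permutation polynomial of F_{q^3} if and only if m is odd. -/

import Mathlib

namespace Stmt1Aux

open Polynomial Finset

variable {F : Type*} [Field F] [Fintype F] [DecidableEq F]

lemma card_filter_root_le (P : F[X]) (hP : P ≠ 0) :
    (Finset.univ.filter fun x : F => P.eval x = 0).card ≤ P.natDegree := by
  have h1 : (Finset.univ.filter fun x : F => P.eval x = 0) ⊆ P.roots.toFinset := by
    intro x hx
    simp only [Finset.mem_filter] at hx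
    rw [Multiset.mem_toFinset, Polynomial.mem_roots hP]
    exact hx.2
  calc (Finset.univ.filter fun x : F => P.eval x = 0).card
      ≤ P.roots.toFinset.card := Finset.card_le_card h1
    _ ≤ Multiset.card P.roots := P.roots.toFinset_card_le
    _ ≤ P.natDegree := P.card_roots'

lemma card_pow_eq_one_le (n : ℕ) (hn : 0 < n) :
    (Finset.univ.filter fun z : F => z ^ n = 1).card ≤ n := by
  have h1 : (Finset.univ.filter fun z : F => z ^ n = 1) ⊆
      (Polynomial.nthRoots n (1 : F)).toFinset := by
    intro z hz
    simp only [Finset.mem_filter] at hz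
    rw [Multiset.mem_toFinset, Polynomial.mem_nthRoots hn]
    exact hz.2
  calc _ ≤ (Polynomial.nthRoots n (1:F)).toFinset.card := Finset.card_le_card h1
    _ ≤ Multiset.card (Polynomial.nthRoots n (1:F)) := Multiset.toFinset_card_le _
    _ ≤ n := Polynomial.card_nthRoots n (1:F)

omit [Field F] [Fintype F] in
lemma surj_of_counting {f : F → F} {S T : Finset F} {k : ℕ} (hk : 0 < k)
    (hmaps : ∀ a ∈ S, f a ∈ T)
    (hfib : ∀ b, (S.filter fun a => f a = b).card ≤ k)
    (hcard : T.card * k ≤ S.card) :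
    ∀ b ∈ T, ∃ a ∈ S, f a = b := by
  have hI : S.image f ⊆ T := by
    intro b hb
    obtain ⟨a, ha, rfl⟩ := Finset.mem_image.mp hb
    exact hmaps a ha
  have h1 : S.card ≤ k * (S.image f).card :=
    Finset.card_le_mul_card_image S k (fun b _ => hfib b)
  have h2 : T.card ≤ (S.image f).card := by
    have h3 := hcard.trans h1
    rw [mul_comm] at h3
    exact Nat.le_of_mul_le_mul_left h3 hk
  have hTI : S.image f = T := Finset.eq_of_subset_of_card_le hI h2
  intro b hb
  rw [← hTI] at hb
  obtain ⟨a, ha, h⟩ := Finset.mem_image.mp hb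
  exact ⟨a, ha, h⟩

/-- the trace function to the subfield of size q -/
def trc (q : ℕ) (x : F) : F := x + x ^ q + x ^ q ^ 2

omit [Fintype F] [DecidableEq F] in
lemma addq [CharP F 2] {m q : ℕ} (hq : q = 2 ^ m) (x y : F) :
    (x + y) ^ q = x ^ q + y ^ q := by
  subst hq; exact add_pow_char_pow ..

omit [Fintype F] [DecidableEq F] in
lemma add4 [CharP F 2] (x y : F) : (x + y) ^ 4 = x ^ 4 + y ^ 4 := by
  have h : (x + y) ^ 2 ^ 2 = x ^ 2 ^ 2 + y ^ 2 ^ 2 := add_pow_char_pow ..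
  norm_num at h
  exact h

omit [DecidableEq F] in
lemma powq3 {q : ℕ} (hF : Fintype.card F = q ^ 3) (x : F) : (x ^ q ^ 2) ^ q = x := by
  rw [← pow_mul, ← pow_succ]
  rw [show q ^ 3 = Fintype.card F from hF.symm]
  exact FiniteField.pow_card x

omit [Fintype F] [DecidableEq F] in
lemma powq2 {q : ℕ} (x : F) : (x ^ q) ^ q = x ^ q ^ 2 := by
  rw [← pow_mul, sq]

omit [DecidableEq F] in
lemma trc_q [CharP F 2] {m q : ℕ} (hq : q = 2 ^ m) (hF : Fintype.card F = q ^ 3) (x : F) :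
    (trc q x) ^ q = trc q x := by
  unfold trc
  rw [addq hq, addq hq, powq2, powq3 hF]
  ring

omit [Fintype F] [DecidableEq F] in
lemma trc_add [CharP F 2] {m q : ℕ} (hq : q = 2 ^ m) (x y : F) :
    trc q (x + y) = trc q x + trc q y := by
  unfold trc
  rw [addq hq]
  have h2 : (x + y) ^ q ^ 2 = x ^ q ^ 2 + y ^ q ^ 2 := by
    rw [← powq2, ← powq2, ← powq2, addq hq, addq hq]
  rw [h2]; ring

omit [Fintype F] [DecidableEq F] in
lemma trc_smul [CharP F 2] {q : ℕ} (a x : F) (ha : a ^ q = a) :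
    trc q (a * x) = a * trc q x := by
  unfold trc
  have h1 : (a * x) ^ q = a * x ^ q := by rw [mul_pow, ha]
  have h2 : (a * x) ^ q ^ 2 = a * x ^ q ^ 2 := by
    rw [← powq2, h1, mul_pow, ha, powq2]
  rw [h1, h2]; ring

omit [Fintype F] [DecidableEq F] in
lemma trc_four [CharP F 2] {q : ℕ} (x : F) : (trc q x) ^ 4 = trc q (x ^ 4) := by
  unfold trc
  rw [add4, add4]
  have h1 : (x ^ q) ^ 4 = (x ^ 4) ^ q := by rw [← pow_mul, ← pow_mul, mul_comm]
  have h2 : (x ^ q ^ 2) ^ 4 = (x ^ 4) ^ q ^ 2 := by rw [← pow_mul, ← pow_mul, mul_comm]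
  rw [h1, h2]

omit [Fintype F] [DecidableEq F] in
/-- the key identity: the polynomial map in terms of the trace -/
lemma key [CharP F 2] {q : ℕ} (x : F) :
    x + x ^ (4 * q ^ 2 + 1) + x ^ (q + 4) + x ^ (q ^ 2 + 4) + x ^ (4 * q + 1)
      = x + (trc q x) ^ 4 * x + (trc q x) * x ^ 4 := by
  have h2 : (2 : F) = 0 := by
    have := CharTwo.two_eq_zero (R := F)
    exact_mod_cast this
  have e1 : x ^ (4 * q ^ 2 + 1) = (x ^ q ^ 2) ^ 4 * x := by
    rw [pow_add, pow_one, ← pow_mul, mul_comm (q ^ 2) 4]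
  have e2 : x ^ (q + 4) = x ^ q * x ^ 4 := by rw [pow_add]
  have e3 : x ^ (q ^ 2 + 4) = x ^ q ^ 2 * x ^ 4 := by rw [pow_add]
  have e4 : x ^ (4 * q + 1) = (x ^ q) ^ 4 * x := by
    rw [pow_add, pow_one, ← pow_mul, mul_comm q 4]
  have e5 : (trc q x) ^ 4 = x ^ 4 + (x ^ q) ^ 4 + (x ^ q ^ 2) ^ 4 := by
    unfold trc; rw [add4, add4]
  rw [e1, e2, e3, e4, e5]
  unfold trc
  linear_combination (-(x ^ 5)) * h2

omit [DecidableEq F] in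
lemma trc_f [CharP F 2] {m q : ℕ} (hq : q = 2 ^ m) (hF : Fintype.card F = q ^ 3) (x : F) :
    trc q (x + (trc q x) ^ 4 * x + (trc q x) * x ^ 4) = trc q x := by
  have h2 : (2 : F) = 0 := by
    have := CharTwo.two_eq_zero (R := F)
    exact_mod_cast this
  have hs : (trc q x) ^ q = trc q x := trc_q hq hF x
  have hs4 : ((trc q x) ^ 4) ^ q = (trc q x) ^ 4 := by
    rw [← pow_mul, mul_comm, pow_mul, hs]
  rw [trc_add hq, trc_add hq, trc_smul _ _ hs4, trc_smul _ _ hs, ← trc_four]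
  linear_combination ((trc q x) ^ 5) * h2

end Stmt1Aux

open Stmt1Aux Finset Polynomial

theorem stmt_1 (m : ℕ) (hm : 0 < m) (q : ℕ) (hq : q = 2 ^ m)
    (F : Type*) [Field F] [Fintype F] (hF : Fintype.card F = q ^ 3) :
    Function.Bijective
      (fun x : F => x + x ^ (4 * q ^ 2 + 1) + x ^ (q + 4) + x ^ (q ^ 2 + 4) + x ^ (4 * q + 1))
      ↔ Odd m := by
  classical
  have hq2 : 2 ≤ q := by
    subst hq
    calc 2 = 2 ^ 1 := rfl
      _ ≤ 2 ^ m := Nat.pow_le_pow_right (by norm_num) hm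
  have hq0 : 0 < q := by omega
  haveI hp2 : Fact (Nat.Prime 2) := ⟨Nat.prime_two⟩
  haveI hchar : CharP F 2 := by
    obtain ⟨n, hp, hcard⟩ := FiniteField.card F (ringChar F)
    have h2 : ringChar F = 2 := by
      have hd : ringChar F ∣ 2 ^ (3 * m) := by
        have e : (2:ℕ) ^ (3 * m) = ringChar F ^ (n : ℕ) := by
          rw [← hcard, hF, hq, ← pow_mul, mul_comm]
        rw [e]
        exact dvd_pow_self _ (by positivity)
      have hd2 := Nat.Prime.dvd_of_dvd_pow hp hd
      exact (Nat.prime_dvd_prime_iff_eq hp Nat.prime_two).mp hd2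
    rw [← h2]; exact ringChar.charP F
  have h2F : (2 : F) = 0 := by
    have := CharTwo.two_eq_zero (R := F)
    exact_mod_cast this
  have hxx : ∀ x : F, x + x = 0 := CharTwo.add_self_eq_zero
  have hkey : ∀ x : F,
      x + x ^ (4 * q ^ 2 + 1) + x ^ (q + 4) + x ^ (q ^ 2 + 4) + x ^ (4 * q + 1)
        = x + (trc q x) ^ 4 * x + (trc q x) * x ^ 4 := fun x => key x
  -- Trace surjectivity onto the subfield K = {x : x^q = x}
  have htrc_fiber : ∀ b : F, ((univ : Finset F).filter fun a : F => trc q a = b).card ≤ q ^ 2 := by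
    intro b
    by_cases hne : ((univ : Finset F).filter fun a : F => trc q a = b).Nonempty
    · obtain ⟨a₀, ha₀m⟩ := hne
      have ha₀ : trc q a₀ = b := (Finset.mem_filter.mp ha₀m).2
      set P : F[X] := X + X ^ q + X ^ q ^ 2 with hP
      have hPeval : ∀ z : F, P.eval z = trc q z := by
        intro z; simp [hP, trc]
      have hq1 : q ≠ 1 := by omega
      have hqq1 : q ^ 2 ≠ 1 := by nlinarith
      have hPne : P ≠ 0 := by
        intro h0
        have hc : P.coeff 1 = 1 := by
          simp [hP, Polynomial.coeff_X_pow, hq1.symm, hqq1.symm,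
            (fun h => hq1 h.symm : ¬ (1 = q)), (fun h => hqq1 h.symm : ¬ (1 = q ^ 2))]
        rw [h0] at hc
        simp at hc
      have hPdeg : P.natDegree ≤ q ^ 2 := by
        have hqle : q ≤ q ^ 2 := by nlinarith
        apply le_trans (Polynomial.natDegree_add_le _ _)
        simp only [Polynomial.natDegree_X_pow]
        apply max_le _ le_rfl
        apply le_trans (Polynomial.natDegree_add_le _ _)
        simp [Polynomial.natDegree_X, Polynomial.natDegree_X_pow]
        omega
      have hroots := card_filter_root_le P hPne
      refine le_trans (Finset.card_le_card_of_injOn (fun a => a + a₀) ?_ ?_)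
        (le_trans hroots hPdeg)
      · intro a ham
        have ha : trc q a = b := (Finset.mem_filter.mp ham).2
        simp only [Finset.mem_coe, Finset.mem_filter]
        refine ⟨Finset.mem_univ _, ?_⟩
        rw [hPeval, trc_add hq, ha, ha₀, hxx]
      · intro a _ a' _ h
        exact add_right_cancel h
    · rw [Finset.not_nonempty_iff_eq_empty] at hne
      rw [hne]
      simp
  have hKf_card : ((univ : Finset F).filter fun x : F => x ^ q = x).card ≤ q := by
    set P2 : F[X] := X ^ q - X with hP2
    have hq1 : q ≠ 1 := by omega
    have hP2ne : P2 ≠ 0 := by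
      intro h0
      have hc : P2.coeff 1 = -1 := by
        rw [hP2, Polynomial.coeff_sub, Polynomial.coeff_X_pow, Polynomial.coeff_X_one,
          if_neg (by omega : ¬ (1 = q))]
        ring
      rw [h0] at hc
      simp at hc
    have hP2deg : P2.natDegree ≤ q := by
      apply le_trans (Polynomial.natDegree_sub_le _ _)
      simp [Polynomial.natDegree_X, Polynomial.natDegree_X_pow]
      omega
    have h1 : ((univ : Finset F).filter fun x : F => x ^ q = x)
        ⊆ (univ : Finset F).filter fun x : F => P2.eval x = 0 := by
      intro x hx
      rw [Finset.mem_filter] at hx ⊢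
      refine ⟨Finset.mem_univ _, ?_⟩
      simp [hP2, sub_eq_zero, hx.2]
    exact le_trans (Finset.card_le_card h1) (le_trans (card_filter_root_le P2 hP2ne) hP2deg)
  have htrc_surj : ∀ b : F, b ^ q = b → ∃ a : F, trc q a = b := by
    intro b hb
    have hmaps : ∀ a ∈ (univ : Finset F), trc q a ∈
        (univ : Finset F).filter fun x : F => x ^ q = x := by
      intro a _
      rw [Finset.mem_filter]
      exact ⟨Finset.mem_univ _, trc_q hq hF a⟩
    have hcard : (((univ : Finset F).filter fun x : F => x ^ q = x)).card * q ^ 2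
        ≤ (univ : Finset F).card := by
      rw [Finset.card_univ, hF]
      calc _ ≤ q * q ^ 2 := Nat.mul_le_mul_right _ hKf_card
        _ = q ^ 3 := by ring
    have := surj_of_counting (by positivity) hmaps htrc_fiber hcard b
      (by rw [Finset.mem_filter]; exact ⟨Finset.mem_univ _, hb⟩)
    obtain ⟨a, _, ha⟩ := this
    exact ⟨a, ha⟩
  constructor
  · -- Bijective → Odd m
    intro hbij
    by_contra hnodd
    have hmeven : Even m := Nat.not_odd_iff_even.mp hnodd
    obtain ⟨k, hk⟩ := hmeven
    have hk1 : 1 ≤ k := by omega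
    have hq4 : 4 ≤ q := by
      subst hq
      calc 4 = 2 ^ 2 := rfl
        _ ≤ 2 ^ m := Nat.pow_le_pow_right (by norm_num) (by omega)
    -- 3 ∣ q - 1
    have h3q1 : 3 ∣ q - 1 := by
      have h4k : (4:ℕ) ^ k ≡ 1 ^ k [MOD 3] := Nat.ModEq.pow k (by decide)
      have hqe : q = 4 ^ k := by
        rw [hq, hk, ← two_mul, pow_mul]
        norm_num
      rw [hqe]
      have : (1:ℕ) ^ k ≡ 4 ^ k [MOD 3] := h4k.symm
      rw [one_pow] at this
      exact (Nat.modEq_iff_dvd' (Nat.one_le_pow _ _ (by norm_num))).mp this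
    obtain ⟨r, hr⟩ := h3q1
    have hq3r : q = 3 * r + 1 := by omega
    have hr1 : 1 ≤ r := by omega
    -- N = (q^3-1)/3
    set N : ℕ := r * (q ^ 2 + q + 1) with hN_def
    have hNe : q ^ 3 = 3 * N + 1 := by
      rw [hN_def, hq3r]; ring
    have hN3 : q ^ 3 - 1 = 3 * N := by omega
    have hN1 : 1 ≤ N := by
      rw [hN_def]
      calc 1 = 1 * 1 := rfl
        _ ≤ r * (q ^ 2 + q + 1) := Nat.mul_le_mul hr1 (by omega)
    have heN : N = (q - 1) * (3 * r ^ 2 + 3 * r + 1) := by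
      rw [hN_def, hr, hq3r]; ring
    -- a primitive cube root of unity
    have hcardU : Fintype.card Fˣ = q ^ 3 - 1 := by
      rw [Fintype.card_units, hF]
    haveI hp3 : Fact (Nat.Prime 3) := ⟨Nat.prime_three⟩
    obtain ⟨g, hg⟩ := exists_prime_orderOf_dvd_card 3 (by rw [hcardU, hN3]; exact Dvd.intro N rfl)
    set ω : F := (g : F) with hω_def
    have hω3 : ω ^ 3 = 1 := by
      have h1 := pow_orderOf_eq_one g
      rw [hg] at h1
      rw [hω_def, ← Units.val_pow_eq_pow_val, h1, Units.val_one]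
    have hω1 : ω ≠ 1 := by
      intro h
      have hg1 : g = 1 := Units.ext (by rw [Units.val_one]; exact h)
      rw [hg1, orderOf_one] at hg
      omega
    have hω0 : ω ≠ 0 := Units.ne_zero g
    have hωq : ω ^ q = ω := by
      rw [hq3r, pow_add, pow_mul, hω3, one_pow, pow_one, one_mul]
    -- there is a noncube in K
    have hnc : ∃ t : F, t ^ q = t ∧ t ≠ 0 ∧ t ≠ 1 ∧ ∀ w : F, w ^ q = w → w ^ 3 ≠ t := by
      by_contra hcon
      push_neg at hcon
      set Ks : Finset F := (univ : Finset F).filter (fun x : F => x ^ q = x ∧ x ≠ 0) with hKs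
      have hmem : ∀ x : F, x ∈ Ks ↔ (x ^ q = x ∧ x ≠ 0) := by
        intro x; rw [hKs, Finset.mem_filter]; simp
      have himage : Ks.image (fun x : F => x ^ 3) = Ks := by
        apply Finset.Subset.antisymm
        · intro b hb
          obtain ⟨a, ha, rfl⟩ := Finset.mem_image.mp hb
          rw [hmem] at ha ⊢
          constructor
          · rw [← pow_mul, mul_comm, pow_mul, ha.1]
          · exact pow_ne_zero _ ha.2
        · intro t ht
          rw [hmem] at ht
          by_cases ht1 : t = 1
          · subst ht1
            apply Finset.mem_image.mpr
            exact ⟨1, by rw [hmem]; exact ⟨one_pow q, one_ne_zero⟩, one_pow 3⟩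
          · obtain ⟨w, hw1, hw2⟩ := hcon t ht.1 ht.2 ht1
            apply Finset.mem_image.mpr
            refine ⟨w, ?_, hw2⟩
            rw [hmem]
            refine ⟨hw1, ?_⟩
            intro h0
            rw [h0] at hw2
            exact ht.2 (by rw [← hw2]; norm_num)
      have hinj : Set.InjOn (fun x : F => x ^ 3) Ks :=
        Finset.card_image_iff.mp (by rw [himage])
      have hωm : ω ∈ Ks := by rw [hmem]; exact ⟨hωq, hω0⟩
      have h1m : (1:F) ∈ Ks := by rw [hmem]; exact ⟨one_pow q, one_ne_zero⟩
      have : ω = 1 := hinj (Finset.mem_coe.mpr hωm) (Finset.mem_coe.mpr h1m)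
        (by simp [hω3])
      exact hω1 this
    obtain ⟨t, htq, ht0, ht1, htnc⟩ := hnc
    have htp1 : t + 1 ≠ 0 := by
      intro h
      apply ht1
      linear_combination h - h2F
    set s : F := t * (t + 1)⁻¹ with hs_def
    have hs0 : s ≠ 0 := mul_ne_zero ht0 (inv_ne_zero htp1)
    have htp1q : (t + 1) ^ q = t + 1 := by rw [addq hq, htq, one_pow]
    have hsq : s ^ q = s := by rw [hs_def, mul_pow, inv_pow, htp1q, htq]
    have hsum : (t + 1) + t = 1 := by linear_combination t * h2F
    have h1s : 1 + s = (t + 1)⁻¹ := by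
      have h1 : (1:F) = (t+1) * (t+1)⁻¹ := (mul_inv_cancel₀ htp1).symm
      rw [hs_def]
      nth_rewrite 1 [h1]
      rw [← add_mul, hsum, one_mul]
    have hs1 : s ≠ 1 := by
      intro h
      have h0 : ((t+1)⁻¹ : F) = 0 := by rw [← h1s, h]; linear_combination h2F
      exact htp1 (inv_eq_zero.mp h0)
    have h1s0 : (1 + s : F) ≠ 0 := by rw [h1s]; exact inv_ne_zero htp1
    set c : F := (1 + s) ^ 4 * s⁻¹ with hc_def
    have hc0 : c ≠ 0 := mul_ne_zero (pow_ne_zero _ h1s0) (inv_ne_zero hs0)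
    have hcq : c ^ q = c := by
      rw [hc_def, mul_pow, inv_pow]
      have e : ((1+s)^4)^q = (1+s)^4 := by
        rw [← pow_mul, mul_comm, pow_mul, addq hq, one_pow, hsq]
      rw [e, hsq]
    have hcq1 : c ^ (q - 1) = 1 := by
      have h' : c ^ (q - 1) * c = 1 * c := by
        rw [one_mul, ← pow_succ, show q - 1 + 1 = q by omega, hcq]
      exact mul_right_cancel₀ hc0 h'
    have hcN : c ^ N = 1 := by rw [heN, pow_mul, hcq1, one_pow]
    -- cube root of c exists
    have hfib3 : ∀ b : F,
        (((univ : Finset F).filter fun x : F => x ≠ 0).filter fun a => a ^ 3 = b).card ≤ 3 := by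
      intro b
      by_cases hne : (((univ : Finset F).filter fun x : F => x ≠ 0).filter
          fun a => a ^ 3 = b).Nonempty
      · obtain ⟨a₀, ha₀m⟩ := hne
        have ha₀ := Finset.mem_filter.mp ha₀m
        have ha₀0 : a₀ ≠ 0 := (Finset.mem_filter.mp ha₀.1).2
        have ha₀3 : a₀ ^ 3 = b := ha₀.2
        have hb0 : b ≠ 0 := by rw [← ha₀3]; exact pow_ne_zero _ ha₀0
        refine le_trans (Finset.card_le_card_of_injOn (fun a => a * a₀⁻¹) ?_ ?_)
          (card_pow_eq_one_le 3 (by norm_num))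
        · intro a ham
          have ha := Finset.mem_filter.mp ham
          simp only [Finset.mem_coe, Finset.mem_filter]
          refine ⟨Finset.mem_univ _, ?_⟩
          rw [mul_pow, inv_pow, ha.2, ha₀3, mul_inv_cancel₀ hb0]
        · intro a _ a' _ h
          exact mul_right_cancel₀ (inv_ne_zero ha₀0) h
      · rw [Finset.not_nonempty_iff_eq_empty] at hne
        rw [hne]; simp
    have hmaps3 : ∀ a ∈ (univ : Finset F).filter fun x : F => x ≠ 0,
        a ^ 3 ∈ (univ : Finset F).filter fun z : F => z ^ N = 1 := by
      intro a ham
      have ha0 : a ≠ 0 := (Finset.mem_filter.mp ham).2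
      rw [Finset.mem_filter]
      refine ⟨Finset.mem_univ _, ?_⟩
      rw [← pow_mul, show 3 * N = q ^ 3 - 1 from hN3.symm, ← hF]
      exact FiniteField.pow_card_sub_one_eq_one a ha0
    have hScard : ((univ : Finset F).filter fun x : F => x ≠ 0).card = q ^ 3 - 1 := by
      rw [Finset.filter_ne', Finset.card_erase_of_mem (Finset.mem_univ _), Finset.card_univ, hF]
    have hAcard : ((univ : Finset F).filter fun z : F => z ^ N = 1).card ≤ N :=
      card_pow_eq_one_le N (by omega)
    have hsurj3 := surj_of_counting (k := 3) (by norm_num) hmaps3 hfib3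
      (by rw [hScard, hN3]
          calc _ ≤ N * 3 := Nat.mul_le_mul_right _ hAcard
            _ = 3 * N := by ring)
    obtain ⟨u, hu_mem, hu3⟩ := hsurj3 c
      (by rw [Finset.mem_filter]; exact ⟨Finset.mem_univ _, hcN⟩)
    have hu0 : u ≠ 0 := (Finset.mem_filter.mp hu_mem).2
    by_cases huq : u ^ q = u
    · -- u lies in K : contradiction with t being a noncube in K
      have hwq : (((t+1) * u)⁻¹) ^ q = ((t+1) * u)⁻¹ := by
        rw [inv_pow, mul_pow, htp1q, huq]
      apply htnc _ hwq
      have htu0 : (t + 1) * u ≠ 0 := mul_ne_zero htp1 hu0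
      have hsinv : s⁻¹ = t⁻¹ * (t+1) := by rw [hs_def, mul_inv, inv_inv]
      have h3 : ((t+1) * u) ^ 3 = t⁻¹ := by
        rw [mul_pow, hu3, hc_def, h1s, hsinv, inv_pow]
        rw [show (t+1:F)^3 * (((t+1)^4)⁻¹ * (t⁻¹*(t+1))) = t⁻¹ * ((t+1)^4 * ((t+1)^4)⁻¹) by
          ring, mul_inv_cancel₀ (pow_ne_zero 4 htp1), mul_one]
      rw [inv_pow, h3, inv_inv]
    · -- u has trace zero : build a collision, contradicting injectivity
      set v : F := u ^ q * u⁻¹ with hv_def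
      have hcu3q : (u ^ q) ^ 3 = c := by
        rw [← pow_mul, mul_comm, pow_mul, hu3, hcq]
      have hv3 : v ^ 3 = 1 := by
        rw [hv_def, mul_pow, inv_pow, hcu3q, hu3, mul_inv_cancel₀ hc0]
      have hv1 : v ≠ 1 := by
        intro h
        apply huq
        have h' : u ^ q * u⁻¹ = 1 := by rw [← hv_def, h]
        exact (mul_inv_eq_one₀ hu0).mp h'
      have hvsum : 1 + v + v ^ 2 = 0 := by
        have hfac : (v - 1) * (v ^ 2 + v + 1) = 0 := by linear_combination hv3
        rcases mul_eq_zero.mp hfac with h1 | h1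
        · exact absurd (sub_eq_zero.mp h1) hv1
        · linear_combination h1
      have hvq : v ^ q = v := by
        rw [hq3r, pow_add, pow_mul, hv3, one_pow, pow_one, one_mul]
      have huq_eq : u ^ q = v * u := by
        rw [hv_def, mul_assoc, inv_mul_cancel₀ hu0, mul_one]
      have huq2 : u ^ q ^ 2 = v ^ 2 * u := by
        rw [← powq2, huq_eq, mul_pow, hvq, huq_eq]
        ring
      have htru : trc q u = 0 := by
        unfold Stmt1Aux.trc
        rw [huq_eq, huq2]
        linear_combination u * hvsum
      obtain ⟨x, htrx⟩ := htrc_surj s hsq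
      have hne : x ≠ x + u := by
        intro h
        exact hu0 (left_eq_add.mp h)
      apply hne
      apply hbij.injective
      show x + x ^ (4 * q ^ 2 + 1) + x ^ (q + 4) + x ^ (q ^ 2 + 4) + x ^ (4 * q + 1)
        = (x+u) + (x+u) ^ (4 * q ^ 2 + 1) + (x+u) ^ (q + 4) + (x+u) ^ (q ^ 2 + 4)
          + (x+u) ^ (4 * q + 1)
      rw [hkey x, hkey (x+u)]
      have htrxu : trc q (x + u) = s := by rw [trc_add hq, htrx, htru, add_zero]
      rw [htrx, htrxu]
      have h4 : (x + u) ^ 4 = x ^ 4 + u ^ 4 := add4 x u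
      have e14 : (1 + s) ^ 4 = 1 + s ^ 4 := by rw [add4, one_pow]
      have hsc : s * c = 1 + s ^ 4 := by
        rw [hc_def, mul_comm, mul_assoc, inv_mul_cancel₀ hs0, mul_one, e14]
      have hsu4 : s * u ^ 4 = (1 + s ^ 4) * u := by
        calc s * u ^ 4 = (s * u ^ 3) * u := by ring
          _ = (s * c) * u := by rw [hu3]
          _ = (1 + s ^ 4) * u := by rw [hsc]
      rw [h4]
      linear_combination (-1 : F) * hsu4 + (-(u + s ^ 4 * u)) * h2F
  · -- Odd m → Bijective
    intro hodd
    have hcop : Nat.Coprime 3 (q ^ 3 - 1) := by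
      have h3 : ¬ (3 ∣ q ^ 3 - 1) := by
        intro hdvd
        have h1 : ((q ^ 3 - 1 : ℕ) : ZMod 3) = 0 :=
          (ZMod.natCast_eq_zero_iff _ _).mpr hdvd
        have hq1 : 1 ≤ q ^ 3 := Nat.one_le_pow _ _ hq0
        rw [Nat.cast_sub hq1] at h1
        push_cast at h1
        have hq3 : ((q : ZMod 3)) = -1 := by
          rw [hq]
          push_cast
          rw [show ((2 : ZMod 3)) = -1 by decide]
          exact Odd.neg_one_pow hodd
        rw [hq3] at h1
        have hne : ((-1 : ZMod 3) ^ 3 - 1) ≠ 0 := by decide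
        exact hne h1
      exact (Nat.Prime.coprime_iff_not_dvd Nat.prime_three).mpr h3
    have hcubeinj : ∀ u v : F, u ^ 3 = v ^ 3 → u = v := by
      intro u v h
      by_cases hv : v = 0
      · subst hv
        have h0 : u ^ 3 = 0 := by simpa using h
        exact pow_eq_zero_iff (by norm_num) |>.mp h0
      · have hu : u ≠ 0 := by
          intro h0
          subst h0
          apply hv
          have h0 : v ^ 3 = 0 := by simpa using h.symm
          exact pow_eq_zero_iff (by norm_num) |>.mp h0
        set a : Fˣ := Units.mk0 u hu * (Units.mk0 v hv)⁻¹ with ha_def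
        have ha3 : a ^ 3 = 1 := by
          ext
          push_cast [ha_def]
          field_simp
          rw [Units.val_mk0, Units.val_mk0, h, div_self (pow_ne_zero 3 hv)]
        have hord3 : orderOf a ∣ 3 := orderOf_dvd_of_pow_eq_one ha3
        have hordc : orderOf a ∣ q ^ 3 - 1 := by
          have hcardu : Fintype.card Fˣ = q ^ 3 - 1 := by rw [Fintype.card_units, hF]
          exact hcardu ▸ orderOf_dvd_card
        have h1 : orderOf a = 1 := Nat.eq_one_of_dvd_coprimes hcop hord3 hordc
        have ha1 : a = 1 := orderOf_eq_one_iff.mp h1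
        have : Units.mk0 u hu = Units.mk0 v hv := by
          rwa [ha_def, mul_inv_eq_one] at ha1
        exact congrArg Units.val this
    rw [← Finite.injective_iff_bijective]
    intro x y hxy
    simp only at hxy
    have htfx : trc q (x + x ^ (4 * q ^ 2 + 1) + x ^ (q + 4) + x ^ (q ^ 2 + 4)
        + x ^ (4 * q + 1)) = trc q x := by rw [hkey x]; exact trc_f hq hF x
    have htfy : trc q (y + y ^ (4 * q ^ 2 + 1) + y ^ (q + 4) + y ^ (q ^ 2 + 4)
        + y ^ (4 * q + 1)) = trc q y := by rw [hkey y]; exact trc_f hq hF y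
    have hs : trc q x = trc q y := by
      rw [← htfx, ← htfy, hxy]
    set s : F := trc q x with hs_def
    set u : F := x + y with hu_def
    have htru : trc q u = 0 := by
      rw [hu_def, trc_add hq, ← hs_def, ← hs, hxx]
    by_cases hu0 : u = 0
    · rw [hu_def] at hu0
      linear_combination hu0 - y * h2F
    · -- kernel equation
      have h0 : u * (1 + s ^ 4 + s * u ^ 3) = 0 := by
        have hfx := hkey x
        have hfy := hkey y
        have h4 : (x + y) ^ 4 = x ^ 4 + y ^ 4 := add4 x y
        have heq : u * (1 + s ^ 4 + s * u ^ 3)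
            = (x + (trc q x) ^ 4 * x + (trc q x) * x ^ 4)
              + (y + (trc q y) ^ 4 * y + (trc q y) * y ^ 4) := by
          rw [hu_def, ← hs, ← hs_def]
          linear_combination s * h4
        rw [heq, ← hfx, ← hfy, hxy, hxx]
      have hker : 1 + s ^ 4 + s * u ^ 3 = 0 := by
        rcases mul_eq_zero.mp h0 with h | h
        · exact absurd h hu0
        · exact h
      have hsu : s * u ^ 3 = 1 + s ^ 4 := by
        linear_combination hker - (1 + s ^ 4) * h2F
      have hs0 : s ≠ 0 := by
        intro h0s
        rw [h0s] at hsu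
        simp at hsu
      have hcu : u ^ 3 = (1 + s ^ 4) * s⁻¹ := by
        field_simp at hsu ⊢
        linear_combination hsu
      have hsq : s ^ q = s := trc_q hq hF x
      have hcq : ((1 + s ^ 4) * s⁻¹) ^ q = (1 + s ^ 4) * s⁻¹ := by
        rw [mul_pow, inv_pow, addq hq, one_pow]
        rw [show (s ^ 4) ^ q = (s ^ q) ^ 4 by rw [← pow_mul, ← pow_mul, mul_comm]]
        rw [hsq]
      have huq : u ^ q = u := by
        apply hcubeinj
        calc (u ^ q) ^ 3 = (u ^ 3) ^ q := by rw [← pow_mul, ← pow_mul, mul_comm]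
          _ = ((1 + s ^ 4) * s⁻¹) ^ q := by rw [hcu]
          _ = u ^ 3 := by rw [hcq, ← hcu]
      have huq2 : u ^ q ^ 2 = u := by rw [← powq2, huq, huq]
      have htruu : trc q u = u := by
        unfold Stmt1Aux.trc
        rw [huq, huq2]
        linear_combination u * h2F
      rw [htru] at htruu
      exact absurd htruu.symm hu0
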